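/- Let γ > 1 and let left/right states have u_{nL} = u_{nR} = 0, p_L = p_R = p > 0, arbitrary densities ρ_L, ρ_R > 0 and arbitrary tangential velocities u_{tL}, u_{tR}. Let S_L < 0 < S_R be the wave speeds and let ã > 0 be any interface sound speed. Using the Roe averages ρ̃ = √(ρ_L ρ_R), ũ_n = (√ρ_L u_{nL} + √ρ_R u_{nR})/(√ρ_L + √ρ_R) = 0 and ũ_t = (√ρ_L u_{tL} + √ρ_R u_{tR})/(√ρ_L + √ρ_R), the anti-diffusion coefficients δ₂ = δ₃ = ã/(ã + |ũ_n|) equal 1, and the HLLEM interface flux equals (0, p, 0, 0), the exact Euler flux of the stationary contact–shear discontinuity; i.e., the HLLEM scheme resolves stationary contact and shear discontinuities exactly. -/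

import Mathlib

/-- The HLLEM flux at an interface: HLL flux plus the anti-diffusion term
`B·ΔU = δ₂ α̃₂ R̃₂ + δ₃ α̃₃ R̃₃` built from Roe averages, with
`δ₂ = δ₃ = ã/(ã + |ũ_n|)`. -/
noncomputable def hllemFlux (γ SL SR atil ρL ρR pL pR unL unR utL utR : ℝ) :
    Fin 4 → ℝ :=
  let sL := Real.sqrt ρL
  let sR := Real.sqrt ρR
  let ρt := Real.sqrt (ρL * ρR)
  let unt := (sL * unL + sR * unR) / (sL + sR)
  let utt := (sL * utL + sR * utR) / (sL + sR)
  let δ := atil / (atil + |unt|)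
  let rEL := pL / (γ - 1) + ρL * (unL ^ 2 + utL ^ 2) / 2
  let rER := pR / (γ - 1) + ρR * (unR ^ 2 + utR ^ 2) / 2
  let UL : Fin 4 → ℝ := ![ρL, ρL * unL, ρL * utL, rEL]
  let UR : Fin 4 → ℝ := ![ρR, ρR * unR, ρR * utR, rER]
  let FL : Fin 4 → ℝ := ![ρL * unL, ρL * unL ^ 2 + pL, ρL * unL * utL, (rEL + pL) * unL]
  let FR : Fin 4 → ℝ := ![ρR * unR, ρR * unR ^ 2 + pR, ρR * unR * utR, (rER + pR) * unR]
  let α2 := (ρR - ρL) - (pR - pL) / atil ^ 2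
  let α3 := ρt * (utR - utL)
  let R2 : Fin 4 → ℝ := ![1, unt, utt, (unt ^ 2 + utt ^ 2) / 2]
  let R3 : Fin 4 → ℝ := ![0, 0, 1, utt]
  (SR - SL)⁻¹ • (SR • FL - SL • FR)
    + (SR * SL / (SR - SL)) • ((UR - UL) - ((δ * α2) • R2 + (δ * α3) • R3))

/-- The HLLEM scheme resolves stationary contact and shear discontinuities
exactly: for `u_{nL} = u_{nR} = 0` and equal pressures, the Roe-averaged
normal velocity vanishes, so `δ₂ = δ₃ = ã/(ã + |ũ_n|) = 1`, and the interface
flux is the exact Euler flux `(0, p, 0, 0)`. -/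
theorem hllem_resolves_stationary_contact_shear
    (γ p ρL ρR utL utR SL SR atil : ℝ) (hγ : 1 < γ) (hp : 0 < p)
    (hρL : 0 < ρL) (hρR : 0 < ρR) (hSL : SL < 0) (hSR : 0 < SR) (ha : 0 < atil) :
    (atil / (atil +
        |(Real.sqrt ρL * 0 + Real.sqrt ρR * 0) / (Real.sqrt ρL + Real.sqrt ρR)|) = 1)
    ∧ hllemFlux γ SL SR atil ρL ρR p p 0 0 utL utR = ![0, p, 0, 0] := by
  constructor
  · simp [div_self ha.ne']
  · obtain ⟨a, ha0, rfl⟩ : ∃ a, 0 < a ∧ ρL = a ^ 2 :=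
      ⟨Real.sqrt ρL, Real.sqrt_pos.mpr hρL, (Real.sq_sqrt hρL.le).symm⟩
    obtain ⟨b, hb0, rfl⟩ : ∃ b, 0 < b ∧ ρR = b ^ 2 :=
      ⟨Real.sqrt ρR, Real.sqrt_pos.mpr hρR, (Real.sq_sqrt hρR.le).symm⟩
    have h1 : Real.sqrt (a ^ 2) = a := Real.sqrt_sq ha0.le
    have h2 : Real.sqrt (b ^ 2) = b := Real.sqrt_sq hb0.le
    have h3 : Real.sqrt (a ^ 2 * b ^ 2) = a * b := by
      rw [Real.sqrt_mul (by positivity), h1, h2]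
    have hab : a + b ≠ 0 := by positivity
    have hΔS : SR - SL ≠ 0 := by linarith
    funext i
    fin_cases i <;>
      simp only [hllemFlux, h1, h2, h3, mul_zero, zero_mul, add_zero, zero_add, abs_zero,
        div_self ha.ne', zero_div, sub_self, Pi.add_apply, Pi.smul_apply, Pi.sub_apply,
        smul_eq_mul, Matrix.cons_val_zero, Matrix.cons_val_one, Matrix.head_cons,
        Matrix.cons_val_two, Matrix.cons_val_three, Matrix.tail_cons, ne_eq,
          Fin.reduceFinMk, Fin.isValue] <;>
      field_simp <;>
      ring
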